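/- Suppose Assumption A2 holds with parameter δ > 0. Then for any Z ∈ R^{n×r}, setting H = Z − Z̄, we have (σ_r − δ/2) ‖H‖_F² + ‖H^T Z̄‖_F² ≤ (1/m) Σ_{i=1}^m trace(H^T A_i Z̄)² ≤ (σ_1 + δ/2) ‖H‖_F² + ‖H^T Z̄‖_F². -/

import Mathlib

open Matrix MeasureTheory ProbabilityTheory Real
open scoped BigOperators ENNReal

noncomputable section

/-- Frobenius norm of a real matrix. -/
def frobNorm {a b : ℕ} (M : Matrix (Fin a) (Fin b) ℝ) : ℝ :=
  Real.sqrt (∑ i, ∑ j, (M i j) ^ 2)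

/-- Frobenius (trace) inner product `⟨M, N⟩ = trace (Mᵀ N)`. -/
def frobInner {a b : ℕ} (M N : Matrix (Fin a) (Fin b) ℝ) : ℝ :=
  ∑ i, ∑ j, M i j * N i j

/-- Operator (spectral) norm of a real square matrix. -/
def opNorm {n : ℕ} (M : Matrix (Fin n) (Fin n) ℝ) : ℝ :=
  ‖LinearMap.toContinuousLinearMap (Matrix.toEuclideanLin M)‖

/-- An `r × r` real matrix is orthonormal if `U Uᵀ = Uᵀ U = I`. -/
def IsOrthoMat {r : ℕ} (U : Matrix (Fin r) (Fin r) ℝ) : Prop :=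
  U * Uᵀ = 1 ∧ Uᵀ * U = 1

/-- The solution set `S̃ = {Z* U : U orthonormal}`. -/
def solSet {n r : ℕ} (Zstar : Matrix (Fin n) (Fin r) ℝ) : Set (Matrix (Fin n) (Fin r) ℝ) :=
  {Zt | ∃ U, IsOrthoMat U ∧ Zt = Zstar * U}

/-- The distance `d(Z, Z*) = min_{Z̃ ∈ S̃} ‖Z − Z̃‖_F`. -/
def dSol {n r : ℕ} (Z Zstar : Matrix (Fin n) (Fin r) ℝ) : ℝ :=
  ⨅ Zt : solSet Zstar, frobNorm (Z - (Zt : Matrix (Fin n) (Fin r) ℝ))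

/-- `Zbar` is a matrix in the solution set closest to `Z`. -/
def IsClosest {n r : ℕ} (Zstar Z Zbar : Matrix (Fin n) (Fin r) ℝ) : Prop :=
  Zbar ∈ solSet Zstar ∧ ∀ Zt ∈ solSet Zstar, frobNorm (Z - Zbar) ≤ frobNorm (Z - Zt)

/-- The gradient `∇f(Z) = (1/m) Σ_i (trace(Zᵀ A_i Z) − b_i) A_i Z`. -/
def gradf {n r m : ℕ} (A : Fin m → Matrix (Fin n) (Fin n) ℝ) (b : Fin m → ℝ)
    (Z : Matrix (Fin n) (Fin r) ℝ) : Matrix (Fin n) (Fin r) ℝ :=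
  (1 / (m : ℝ)) • ∑ i, (Matrix.trace (Zᵀ * A i * Z) - b i) • (A i * Z)

/-- Assumption A1 with parameter `δ`. -/
def AssumpA1 {n m : ℕ} (A : Fin m → Matrix (Fin n) (Fin n) ℝ) (σ1 : ℝ) (r : ℕ)
    (δ : ℝ) : Prop :=
  ∀ u : Fin n → ℝ, Real.sqrt (∑ i, u i ^ 2) ≤ Real.sqrt σ1 →
    opNorm ((1 / (m : ℝ)) • ∑ i, (u ⬝ᵥ (A i).mulVec u) • A i - (2 : ℝ) • vecMulVec u u)
      ≤ δ / r

/-- Assumption A2 with parameter `δ`. -/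
def AssumpA2 {n r m : ℕ} (A : Fin m → Matrix (Fin n) (Fin n) ℝ)
    (Zstar : Matrix (Fin n) (Fin r) ℝ) (δ : ℝ) : Prop :=
  ∀ Zt ∈ solSet Zstar, ∀ s k : Fin r,
    opNorm ((1 / (m : ℝ)) •
        ∑ i, (2 : ℝ) • (A i * vecMulVec (fun j => Zt j s) (fun j => Zt j k) * A i)
      - ((2 * ((fun j => Zt j s) ⬝ᵥ fun j => Zt j k)) • (1 : Matrix (Fin n) (Fin n) ℝ)
          + (2 : ℝ) • vecMulVec (fun j => Zt j k) (fun j => Zt j s)))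
      ≤ δ / r


-- ===================== auxiliary lemmas =====================

section AuxSum
variable {r : ℕ}

lemma sum_support_pair (a b : Fin r) (hab : a ≠ b) (f : Fin r → ℝ)
    (hf : ∀ e, e ≠ a → e ≠ b → f e = 0) : ∑ e, f e = f a + f b := by
  rw [← Finset.sum_pair hab]
  refine (Finset.sum_subset (Finset.subset_univ _) (fun e _ he => ?_)).symm
  simp only [Finset.mem_insert, Finset.mem_singleton, not_or] at he
  exact hf e he.1 he.2

lemma sum_support_single (a : Fin r) (f : Fin r → ℝ)
    (hf : ∀ e, e ≠ a → f e = 0) : ∑ e, f e = f a :=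
  Finset.sum_eq_single a (fun e _ he => hf e he) (fun h => absurd (Finset.mem_univ a) h)

end AuxSum

section OpNormBound

lemma abs_dot_mulVec_le {n : ℕ} (M : Matrix (Fin n) (Fin n) ℝ) (u v : Fin n → ℝ) :
    |u ⬝ᵥ M.mulVec v| ≤ opNorm M * Real.sqrt (∑ i, u i ^ 2) * Real.sqrt (∑ i, v i ^ 2) := by
  set u' : EuclideanSpace ℝ (Fin n) := (WithLp.equiv 2 _).symm u
  set v' : EuclideanSpace ℝ (Fin n) := (WithLp.equiv 2 _).symm v
  have hnu : ‖u'‖ = Real.sqrt (∑ i, u i ^ 2) := by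
    rw [EuclideanSpace.norm_eq]
    congr 1; apply Finset.sum_congr rfl; intro i _
    simp [u', v', Real.norm_eq_abs, sq_abs]
  have hnv : ‖v'‖ = Real.sqrt (∑ i, v i ^ 2) := by
    rw [EuclideanSpace.norm_eq]
    congr 1; apply Finset.sum_congr rfl; intro i _
    simp [u', v', Real.norm_eq_abs, sq_abs]
  have happ : Matrix.toEuclideanLin M v' = (WithLp.equiv 2 _).symm (M.mulVec v) :=
    rfl
  have hdot : u ⬝ᵥ M.mulVec v = inner ℝ u' (Matrix.toEuclideanLin M v') := by
    rw [happ]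
    simp [u', PiLp.inner_apply, dotProduct, RCLike.inner_apply, mul_comm]
  rw [hdot]
  calc |inner ℝ u' (Matrix.toEuclideanLin M v')| ≤ ‖u'‖ * ‖Matrix.toEuclideanLin M v'‖ :=
        abs_real_inner_le_norm _ _
    _ ≤ ‖u'‖ * (opNorm M * ‖v'‖) := by
        apply mul_le_mul_of_nonneg_left _ (norm_nonneg _)
        exact (LinearMap.toContinuousLinearMap (Matrix.toEuclideanLin M)).le_opNorm v'
    _ = opNorm M * Real.sqrt (∑ i, u i ^ 2) * Real.sqrt (∑ i, v i ^ 2) := by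
        rw [hnu, hnv]; ring

end OpNormBound

section PsdTrace

lemma trace_psd_nonneg {k : ℕ} {Q : Matrix (Fin k) (Fin k) ℝ} (hQ : Q.PosSemidef) :
    0 ≤ Q.trace := by
  rw [Matrix.trace]
  apply Finset.sum_nonneg
  intro i _
  exact hQ.diag_nonneg

open scoped MatrixOrder in
lemma trace_psd_mul_nonneg {k : ℕ} {P Q : Matrix (Fin k) (Fin k) ℝ}
    (hP : P.PosSemidef) (hQ : Q.PosSemidef) : 0 ≤ (P * Q).trace := by
  have hs : (CFC.sqrt P).PosSemidef := Matrix.nonneg_iff_posSemidef.mp (CFC.sqrt_nonneg P)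
  have h1 : P * Q = CFC.sqrt P * (CFC.sqrt P * Q) := by
    rw [← mul_assoc, CFC.sqrt_mul_sqrt_self P (Matrix.nonneg_iff_posSemidef.mpr hP)]
  rw [h1, Matrix.trace_mul_comm]
  have h2 : CFC.sqrt P * Q * CFC.sqrt P = (CFC.sqrt P)ᴴ * Q * CFC.sqrt P := by
    rw [hs.isHermitian.eq]
  rw [h2]
  exact trace_psd_nonneg (hQ.conjTranspose_mul_mul_same (CFC.sqrt P))

lemma conj_sandwich_psd {r : ℕ} (d : Fin r → ℝ) (hd : ∀ s, 0 ≤ d s)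
    (G : Matrix (Fin r) (Fin r) ℝ) :
    (Gᵀ * Matrix.diagonal d * G).PosSemidef := by
  rw [← conjTranspose_eq_transpose_of_trivial]
  exact (Matrix.posSemidef_diagonal_iff.mpr hd).conjTranspose_mul_mul_same G

lemma diag_sub_smul_one {r : ℕ} (sig : Fin r → ℝ) (c : ℝ) :
    Matrix.diagonal sig - c • (1 : Matrix (Fin r) (Fin r) ℝ)
      = Matrix.diagonal (fun s => sig s - c) := by
  ext i j
  by_cases h : i = j <;> simp [Matrix.diagonal, Matrix.one_apply, h]

lemma trace_conj_bounds {r : ℕ} (sig : Fin r → ℝ) {G : Matrix (Fin r) (Fin r) ℝ}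
    (hG : IsOrthoMat G) {Q : Matrix (Fin r) (Fin r) ℝ} (hQ : Q.PosSemidef)
    (lo hi : ℝ) (hlo : ∀ s, lo ≤ sig s) (hhi : ∀ s, sig s ≤ hi) :
    lo * Q.trace ≤ ((Gᵀ * Matrix.diagonal sig * G) * Q).trace ∧
      ((Gᵀ * Matrix.diagonal sig * G) * Q).trace ≤ hi * Q.trace := by
  set P := Gᵀ * Matrix.diagonal sig * G with hPdef
  have hconj : ∀ c : ℝ, Gᵀ * (c • (1 : Matrix (Fin r) (Fin r) ℝ)) * G
      = c • (1 : Matrix (Fin r) (Fin r) ℝ) := by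
    intro c
    rw [Matrix.mul_smul, Matrix.mul_one, Matrix.smul_mul, hG.2]
  constructor
  · have hpsd : (P - lo • (1 : Matrix (Fin r) (Fin r) ℝ)).PosSemidef := by
      have : P - lo • (1 : Matrix (Fin r) (Fin r) ℝ)
          = Gᵀ * Matrix.diagonal (fun s => sig s - lo) * G := by
        rw [← diag_sub_smul_one, Matrix.mul_sub, Matrix.sub_mul, hconj, hPdef]
      rw [this]
      exact conj_sandwich_psd _ (fun s => by linarith [hlo s]) G
    have h0 := trace_psd_mul_nonneg hpsd hQ
    rw [Matrix.sub_mul, Matrix.trace_sub, Matrix.smul_mul, Matrix.trace_smul, smul_eq_mul,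
      Matrix.one_mul] at h0
    linarith
  · have hpsd : (hi • (1 : Matrix (Fin r) (Fin r) ℝ) - P).PosSemidef := by
      have : hi • (1 : Matrix (Fin r) (Fin r) ℝ) - P
          = Gᵀ * Matrix.diagonal (fun s => hi - sig s) * G := by
        have h2 : Matrix.diagonal (fun s => hi - sig s)
            = hi • (1 : Matrix (Fin r) (Fin r) ℝ) - Matrix.diagonal sig := by
          ext i j
          by_cases h : i = j <;> simp [Matrix.diagonal, Matrix.one_apply, h]
        rw [h2, Matrix.mul_sub, Matrix.sub_mul, hconj, hPdef]
      rw [this]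
      exact conj_sandwich_psd _ (fun s => by linarith [hhi s]) G
    have h0 := trace_psd_mul_nonneg hpsd hQ
    rw [Matrix.sub_mul, Matrix.trace_sub, Matrix.smul_mul, Matrix.trace_smul, smul_eq_mul,
      Matrix.one_mul] at h0
    linarith

end PsdTrace

section Rot

def rotM {r : ℕ} (a b : Fin r) (c s : ℝ) : Matrix (Fin r) (Fin r) ℝ :=
  Matrix.of fun i j =>
    if i = a then (if j = a then c else if j = b then s else 0)
    else if i = b then (if j = a then -s else if j = b then c else 0)
    else if i = j then 1 else 0

variable {r : ℕ} {a b : Fin r} {c s : ℝ}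

lemma rot_row_a (x : Fin r) : rotM a b c s a x = if x = a then c else if x = b then s else 0 := by
  simp [rotM]

lemma rot_row_b (hab : a ≠ b) (x : Fin r) :
    rotM a b c s b x = if x = a then -s else if x = b then c else 0 := by
  simp [rotM, Ne.symm hab]

lemma rot_row_other {i : Fin r} (h1 : i ≠ a) (h2 : i ≠ b) (x : Fin r) :
    rotM a b c s i x = if i = x then 1 else 0 := by
  simp [rotM, h1, h2]

lemma rotM_mul_transpose (hab : a ≠ b) (hcs : c ^ 2 + s ^ 2 = 1) :
    rotM a b c s * (rotM a b c s)ᵀ = 1 := by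
  ext i j
  rw [Matrix.mul_apply, Matrix.one_apply]
  simp only [transpose_apply]
  rcases eq_or_ne i a with hia | hia
  · rcases eq_or_ne j a with hja | hja
    · rw [hia, hja, if_pos rfl]
      simp only [rot_row_a]
      rw [sum_support_pair a b hab _ (fun e h1 h2 => by simp [h1, h2])]
      simp [hab, Ne.symm hab]; nlinarith
    · rcases eq_or_ne j b with hjb | hjb
      · rw [hia, hjb, if_neg hab]
        simp only [rot_row_a, rot_row_b hab]
        rw [sum_support_pair a b hab _ (fun e h1 h2 => by simp [h1, h2])]
        simp [hab, Ne.symm hab]; ring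
      · rw [hia, if_neg (Ne.symm hja)]
        simp only [rot_row_a, rot_row_other hja hjb]
        rw [sum_support_single j _ (fun e he => by simp [Ne.symm he])]
        simp [hja, hjb]
  · rcases eq_or_ne i b with hib | hib
    · rcases eq_or_ne j a with hja | hja
      · rw [hib, hja, if_neg (Ne.symm hab)]
        simp only [rot_row_a, rot_row_b hab]
        rw [sum_support_pair a b hab _ (fun e h1 h2 => by simp [h1, h2])]
        simp [hab, Ne.symm hab]; ring
      · rcases eq_or_ne j b with hjb | hjb
        · rw [hib, hjb, if_pos rfl]
          simp only [rot_row_b hab]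
          rw [sum_support_pair a b hab _ (fun e h1 h2 => by simp [h1, h2])]
          simp [hab, Ne.symm hab]; nlinarith
        · rw [hib, if_neg (Ne.symm hjb)]
          simp only [rot_row_b hab, rot_row_other hja hjb]
          rw [sum_support_single j _ (fun e he => by simp [Ne.symm he])]
          simp [hja, hjb]
    · rcases eq_or_ne j a with hja | hja
      · rw [hja, if_neg hia]
        simp only [rot_row_a, rot_row_other hia hib]
        rw [sum_support_single i _ (fun e he => by simp [Ne.symm he])]
        simp [hia, hib]
      · rcases eq_or_ne j b with hjb | hjb
        · rw [hjb, if_neg hib]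
          simp only [rot_row_b hab, rot_row_other hia hib]
          rw [sum_support_single i _ (fun e he => by simp [Ne.symm he])]
          simp [hia, hib]
        · simp only [rot_row_other hia hib, rot_row_other hja hjb]
          rw [sum_support_single i _ (fun e he => by simp [Ne.symm he])]
          by_cases hij : i = j
          · simp [hij]
          · simp [hij, Ne.symm hij]

set_option linter.unreachableTactic false in
set_option linter.unnecessarySeqFocus false in
set_option linter.unusedTactic false in
lemma rotM_transpose (hab : a ≠ b) :
    (rotM a b c s)ᵀ = rotM a b c (-s) := by
  ext i j
  rw [transpose_apply]
  rcases eq_or_ne i a with hia | hia <;> rcases eq_or_ne j a with hja | hja <;>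
    rcases eq_or_ne i b with hib | hib <;> rcases eq_or_ne j b with hjb | hjb <;>
    simp [rotM, hia, hja, hib, hjb, hab, Ne.symm hab] <;>
    first
      | rfl
      | (simp_all [eq_comm])
      | skip

lemma rotM_ortho (hab : a ≠ b) (hcs : c ^ 2 + s ^ 2 = 1) : IsOrthoMat (rotM a b c s) := by
  refine ⟨rotM_mul_transpose hab hcs, ?_⟩
  have h2 : rotM a b c (-s) * (rotM a b c (-s))ᵀ = 1 :=
    rotM_mul_transpose hab (by nlinarith)
  rw [rotM_transpose hab] at h2 ⊢
  rw [show rotM a b c (- -s) = rotM a b c s from by rw [neg_neg]] at h2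
  exact h2

end Rot

section Closest
variable {n r : ℕ}

lemma IsOrthoMat.mul {U V : Matrix (Fin r) (Fin r) ℝ} (hU : IsOrthoMat U) (hV : IsOrthoMat V) :
    IsOrthoMat (U * V) := by
  constructor
  · rw [transpose_mul, show U * V * (Vᵀ * Uᵀ) = U * (V * Vᵀ) * Uᵀ by noncomm_ring, hV.1,
      mul_one, hU.1]
  · rw [transpose_mul, show Vᵀ * Uᵀ * (U * V) = Vᵀ * (Uᵀ * U) * V by noncomm_ring, hU.2,
      mul_one, hV.2]

lemma sum_mul_eq_trace {a b : ℕ} (M N : Matrix (Fin a) (Fin b) ℝ) :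
    ∑ i, ∑ j, M i j * N i j = Matrix.trace (Mᵀ * N) := by
  rw [Matrix.trace]
  rw [Finset.sum_comm]
  apply Finset.sum_congr rfl
  intro j _
  simp [Matrix.mul_apply, Matrix.diag]

lemma frobNorm_sq {a b : ℕ} (M : Matrix (Fin a) (Fin b) ℝ) :
    frobNorm M ^ 2 = ∑ i, ∑ j, (M i j) ^ 2 := by
  apply Real.sq_sqrt
  apply Finset.sum_nonneg; intro i _; apply Finset.sum_nonneg; intro j _; positivity

lemma trace_ortho_conj {X : Matrix (Fin n) (Fin r) ℝ} {U : Matrix (Fin r) (Fin r) ℝ}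
    (hU : IsOrthoMat U) :
    Matrix.trace ((X * U)ᵀ * (X * U)) = Matrix.trace (Xᵀ * X) := by
  rw [transpose_mul, show Uᵀ * Xᵀ * (X * U) = Uᵀ * ((Xᵀ * X) * U) by
      simp only [Matrix.mul_assoc],
    Matrix.trace_mul_comm, show Xᵀ * X * U * Uᵀ = Xᵀ * X * (U * Uᵀ) by
      simp only [Matrix.mul_assoc], hU.1, mul_one]

lemma closest_trace_le {Zstar Z Zbar : Matrix (Fin n) (Fin r) ℝ}
    (h : IsClosest Zstar Z Zbar) {Zt : Matrix (Fin n) (Fin r) ℝ} (hZt : Zt ∈ solSet Zstar) :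
    Matrix.trace (Zᵀ * Zt) ≤ Matrix.trace (Zᵀ * Zbar) := by
  have hle := h.2 Zt hZt
  have hsq : frobNorm (Z - Zbar) ^ 2 ≤ frobNorm (Z - Zt) ^ 2 := by
    apply pow_le_pow_left₀ (Real.sqrt_nonneg _) hle
  rw [frobNorm_sq, frobNorm_sq] at hsq
  obtain ⟨U0, hU0, rfl⟩ := h.1
  obtain ⟨U1, hU1, rfl⟩ := hZt
  have expand : ∀ U : Matrix (Fin r) (Fin r) ℝ, IsOrthoMat U →
      ∑ i, ∑ j, (Z i j - (Zstar * U) i j) ^ 2 =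
      ∑ i, ∑ j, Z i j ^ 2 - 2 * Matrix.trace (Zᵀ * (Zstar * U))
        + Matrix.trace (Zstarᵀ * Zstar) := by
    intro U hU
    rw [← sum_mul_eq_trace, ← trace_ortho_conj hU, ← sum_mul_eq_trace]
    rw [Finset.mul_sum, ← Finset.sum_sub_distrib, ← Finset.sum_add_distrib]
    apply Finset.sum_congr rfl; intro i _
    rw [Finset.mul_sum, ← Finset.sum_sub_distrib, ← Finset.sum_add_distrib]
    apply Finset.sum_congr rfl; intro j _
    simp [Matrix.mul_apply]; ring
  simp only [Matrix.sub_apply] at hsq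
  erw [expand U0 hU0, expand U1 hU1] at hsq
  have hfin : Matrix.trace (Zᵀ * (Zstar * U1)) ≤ Matrix.trace (Zᵀ * (Zstar * U0)) := by linarith
  exact hfin

lemma closest_sym {Zstar Z Zbar : Matrix (Fin n) (Fin r) ℝ}
    (h : IsClosest Zstar Z Zbar) : (Zᵀ * Zbar)ᵀ = Zᵀ * Zbar := by
  set W := Zᵀ * Zbar with hW
  ext a b
  rw [transpose_apply]
  rcases eq_or_ne a b with hab | hab
  · rw [hab]
  have key : ∀ c s : ℝ, c ^ 2 + s ^ 2 = 1 →
      (c - 1) * (W a a + W b b) + s * (W b a - W a b) ≤ 0 := by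
    intro c s hcs
    have hZt : Zbar * rotM a b c s ∈ solSet Zstar := by
      obtain ⟨U0, hU0, hZb⟩ := h.1
      exact ⟨U0 * rotM a b c s, hU0.mul (rotM_ortho hab hcs),
        by rw [hZb]; exact Matrix.mul_assoc _ _ _⟩
    have hle := closest_trace_le h hZt
    rw [← Matrix.mul_assoc, ← hW] at hle
    have htr : Matrix.trace (W * rotM a b c s) - Matrix.trace W
        = (c - 1) * (W a a + W b b) + s * (W b a - W a b) := by
      rw [Matrix.trace, Matrix.trace, ← Finset.sum_sub_distrib]
      rw [sum_support_pair a b hab _ (fun d hda hdb => by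
        have hdd : (W * rotM a b c s) d d = W d d := by
          rw [Matrix.mul_apply]
          rw [sum_support_single d _ (fun e hed => by
            rcases eq_or_ne e a with hea | hea
            · rw [hea, rot_row_a]; simp [hda, hdb]
            · rcases eq_or_ne e b with heb | heb
              · rw [heb, rot_row_b hab]; simp [hda, hdb]
              · rw [rot_row_other hea heb]; simp [hed])]
          rw [rot_row_other hda hdb]; simp
        simp [Matrix.diag_apply, hdd])]
      have ha : (W * rotM a b c s) a a = W a a * c + W a b * (-s) := by
        rw [Matrix.mul_apply]
        rw [sum_support_pair a b hab _ (fun e hea heb => by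
          rw [rot_row_other hea heb]; simp [hea])]
        rw [rot_row_a, rot_row_b hab]; simp
      have hb : (W * rotM a b c s) b b = W b a * s + W b b * c := by
        rw [Matrix.mul_apply]
        rw [sum_support_pair a b hab _ (fun e hea heb => by
          rw [rot_row_other hea heb]; simp [heb])]
        rw [rot_row_a, rot_row_b hab]; simp [hab, Ne.symm hab]
      simp only [Matrix.diag_apply, ha, hb]
      ring
    linarith
  set P := W a a + W b b with hP
  set Q := W b a - W a b with hQ
  have hQ0 : Q = 0 := by
    set t := Real.sqrt (P ^ 2 + Q ^ 2) with ht
    have ht0 : 0 ≤ t := Real.sqrt_nonneg _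
    have ht2 : t ^ 2 = P ^ 2 + Q ^ 2 := Real.sq_sqrt (by positivity)
    rcases eq_or_lt_of_le ht0 with h0 | h0
    · nlinarith [ht2]
    · have hcs : (P / t) ^ 2 + (Q / t) ^ 2 = 1 := by
        field_simp; nlinarith
      have hk := key (P / t) (Q / t) hcs
      have hPt : P ≤ t := by
        rcases le_or_gt P 0 with hP0 | hP0
        · linarith
        · exact (Real.le_sqrt hP0.le (by positivity)).mpr (by nlinarith)
      have hexp : (P / t - 1) * P + (Q / t) * Q = (P ^ 2 + Q ^ 2) / t - P := by ring
      rw [hexp, ← ht2] at hk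
      have htt : t ^ 2 / t = t := by
        rw [sq, mul_div_assoc, div_self (ne_of_gt h0), mul_one]
      rw [htt] at hk
      nlinarith
  linarith [hQ0]

end Closest

section Bil
variable {n : ℕ}

lemma bil_sub (M N : Matrix (Fin n) (Fin n) ℝ) (u v : Fin n → ℝ) :
    u ⬝ᵥ (M - N).mulVec v = u ⬝ᵥ M.mulVec v - u ⬝ᵥ N.mulVec v := by
  rw [Matrix.sub_mulVec, dotProduct_sub]

lemma bil_add (M N : Matrix (Fin n) (Fin n) ℝ) (u v : Fin n → ℝ) :
    u ⬝ᵥ (M + N).mulVec v = u ⬝ᵥ M.mulVec v + u ⬝ᵥ N.mulVec v := by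
  rw [Matrix.add_mulVec, dotProduct_add]

lemma bil_smul (c : ℝ) (M : Matrix (Fin n) (Fin n) ℝ) (u v : Fin n → ℝ) :
    u ⬝ᵥ (c • M).mulVec v = c * (u ⬝ᵥ M.mulVec v) := by
  rw [Matrix.smul_mulVec, dotProduct_smul, smul_eq_mul]

lemma bil_one (u v : Fin n → ℝ) : u ⬝ᵥ (1 : Matrix (Fin n) (Fin n) ℝ).mulVec v = u ⬝ᵥ v := by
  rw [Matrix.one_mulVec]

lemma bil_sum {m : ℕ} (M : Fin m → Matrix (Fin n) (Fin n) ℝ) (u v : Fin n → ℝ) :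
    u ⬝ᵥ (∑ i, M i).mulVec v = ∑ i, u ⬝ᵥ (M i).mulVec v := by
  induction (Finset.univ : Finset (Fin m)) using Finset.induction_on with
  | empty => simp [Matrix.mulVec_zero]
  | insert a s h ih => rw [Finset.sum_insert h, Finset.sum_insert h, bil_add, ih]

lemma bil_vecMulVec (a b u v : Fin n → ℝ) :
    u ⬝ᵥ (vecMulVec a b).mulVec v = (u ⬝ᵥ a) * (b ⬝ᵥ v) := by
  rw [show u ⬝ᵥ a * b ⬝ᵥ v = ∑ j, ∑ l, u j * a j * (b l * v l) from by
    rw [dotProduct, dotProduct, Finset.sum_mul_sum]]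
  simp only [Matrix.mulVec, dotProduct, vecMulVec, of_apply, Finset.mul_sum]
  apply Finset.sum_congr rfl; intro j _; apply Finset.sum_congr rfl; intro l _; ring

lemma bil_sandwich (B : Matrix (Fin n) (Fin n) ℝ) (a b u v : Fin n → ℝ) :
    u ⬝ᵥ (B * vecMulVec a b * B).mulVec v = (u ⬝ᵥ B.mulVec a) * (b ⬝ᵥ B.mulVec v) := by
  rw [← Matrix.mulVec_mulVec, ← Matrix.mulVec_mulVec]
  have h1 : (vecMulVec a b).mulVec (B.mulVec v) = (b ⬝ᵥ B.mulVec v) • a := by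
    ext j
    simp only [vecMulVec, Matrix.mulVec, dotProduct, of_apply, Pi.smul_apply, smul_eq_mul,
      Finset.sum_mul, Finset.mul_sum]
    apply Finset.sum_congr rfl; intro l _
    apply Finset.sum_congr rfl; intro e _; ring
  rw [h1, Matrix.mulVec_smul, dotProduct_smul, smul_eq_mul, mul_comm]

lemma bil_flip (M : Matrix (Fin n) (Fin n) ℝ) (hM : M.IsSymm) (u v : Fin n → ℝ) :
    u ⬝ᵥ M.mulVec v = v ⬝ᵥ M.mulVec u := by
  rw [Matrix.dotProduct_mulVec, ← Matrix.mulVec_transpose, hM.eq, dotProduct_comm]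

end Bil

theorem lemma_A2_cross_bounds {n r m : ℕ} (hr : 0 < r)
    (A : Fin m → Matrix (Fin n) (Fin n) ℝ) (hAsym : ∀ i, (A i).IsSymm)
(Zstar : Matrix (Fin n) (Fin r) ℝ)
    (sig : Fin r → ℝ) (hpos : ∀ s, 0 < sig s)
    (hmono : ∀ s t : Fin r, s ≤ t → sig t ≤ sig s)
    (hspec : ∃ V, IsOrthoMat V ∧ Zstarᵀ * Zstar = V * Matrix.diagonal sig * Vᵀ)
    (δ : ℝ) (hδ0 : 0 < δ)
    (hA2 : AssumpA2 A Zstar δ)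
    (Z Zbar : Matrix (Fin n) (Fin r) ℝ)
    (hZbar : IsClosest Zstar Z Zbar) :
    ((sig ⟨r - 1, Nat.sub_lt hr Nat.one_pos⟩) - δ / 2) * frobNorm (Z - Zbar) ^ 2 + frobNorm ((Z - Zbar)ᵀ * Zbar) ^ 2 ≤
      (1 / (m : ℝ)) * ∑ i, (Matrix.trace ((Z - Zbar)ᵀ * A i * Zbar)) ^ 2 ∧
    (1 / (m : ℝ)) * ∑ i, (Matrix.trace ((Z - Zbar)ᵀ * A i * Zbar)) ^ 2 ≤
      ((sig ⟨0, hr⟩) + δ / 2) * frobNorm (Z - Zbar) ^ 2 + frobNorm ((Z - Zbar)ᵀ * Zbar) ^ 2 := by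
  classical
  obtain ⟨V, hV, hZZ⟩ := hspec
  set H := Z - Zbar with hHdef
  -- column functions
  set T : Fin m → ℝ := fun i => Matrix.trace (Hᵀ * A i * Zbar) with hT
  set cc : Fin m → Fin r → ℝ :=
    fun i s => (fun j => H j s) ⬝ᵥ (A i).mulVec (fun j => Zbar j s) with hcc
  set nrm : Fin r → ℝ := fun s => Real.sqrt (∑ j, H j s ^ 2) with hnrm
  have hnrm0 : ∀ s, 0 ≤ nrm s := fun s => Real.sqrt_nonneg _
  -- trace as sum of columns
  have htrace : ∀ i, T i = ∑ s, cc i s := by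
    intro i
    simp only [hT]
    rw [Matrix.trace]
    apply Finset.sum_congr rfl; intro s _
    simp only [Matrix.diag_apply, Matrix.mul_apply, Matrix.transpose_apply, hcc,
      Matrix.mulVec, dotProduct, Finset.sum_mul, Finset.mul_sum]
    rw [Finset.sum_comm]
    apply Finset.sum_congr rfl; intro j _
    apply Finset.sum_congr rfl; intro l _
    ring
  -- A2 instance matrices
  set N : Fin r → Fin r → Matrix (Fin n) (Fin n) ℝ := fun s k =>
    (1 / (m : ℝ)) •
        ∑ i, (2 : ℝ) • (A i * vecMulVec (fun j => Zbar j s) (fun j => Zbar j k) * A i)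
      - ((2 * ((fun j => Zbar j s) ⬝ᵥ fun j => Zbar j k)) • (1 : Matrix (Fin n) (Fin n) ℝ)
          + (2 : ℝ) • vecMulVec (fun j => Zbar j k) (fun j => Zbar j s)) with hN
  have hNop : ∀ s k, opNorm (N s k) ≤ δ / r := fun s k => hA2 Zbar hZbar.1 s k
  -- symmetry of Hᵀ * Zbar
  have hWsym : ((Hᵀ * Zbar))ᵀ = Hᵀ * Zbar := by
    have h1 := closest_sym hZbar
    have h2 : (Zbarᵀ * Zbar)ᵀ = Zbarᵀ * Zbar := by
      rw [transpose_mul, transpose_transpose]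
    rw [hHdef, Matrix.transpose_sub, Matrix.sub_mul, Matrix.transpose_sub, h1, h2]
  -- pointwise bilinear identity
  have hpoint : ∀ s k : Fin r,
      (1 / (m : ℝ)) * ∑ i, cc i s * cc i k =
      ((fun j => H j s) ⬝ᵥ (N s k).mulVec (fun j => H j k)) / 2
        + ((fun j => Zbar j s) ⬝ᵥ (fun j => Zbar j k))
            * ((fun j => H j s) ⬝ᵥ (fun j => H j k))
        + ((fun j => H j s) ⬝ᵥ (fun j => Zbar j k))
            * ((fun j => Zbar j s) ⬝ᵥ (fun j => H j k)) := by
    intro s k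
    have hNapp : (fun j => H j s) ⬝ᵥ (N s k).mulVec (fun j => H j k)
        = (1 / (m : ℝ)) * ∑ i, 2 * (cc i s * cc i k)
          - (2 * ((fun j => Zbar j s) ⬝ᵥ (fun j => Zbar j k))
              * ((fun j => H j s) ⬝ᵥ (fun j => H j k))
            + 2 * (((fun j => H j s) ⬝ᵥ (fun j => Zbar j k))
              * ((fun j => Zbar j s) ⬝ᵥ (fun j => H j k)))) := by
      simp only [hN]
      rw [bil_sub, bil_smul, bil_sum, bil_add, bil_smul, bil_one, bil_smul, bil_vecMulVec]
      have hsummand : ∀ i : Fin m,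
          (fun j => H j s) ⬝ᵥ ((2 : ℝ) • (A i * vecMulVec (fun j => Zbar j s)
            (fun j => Zbar j k) * A i)).mulVec (fun j => H j k)
          = 2 * (cc i s * cc i k) := by
        intro i
        rw [bil_smul, bil_sandwich,
          bil_flip (A i) (hAsym i) (fun j => Zbar j k) (fun j => H j k)]
      rw [Finset.sum_congr rfl (fun i _ => hsummand i)] <;> ring
    rw [hNapp]
    rw [show ∑ i, 2 * (cc i s * cc i k) = 2 * ∑ i, cc i s * cc i k from by
      rw [Finset.mul_sum]]
    ring
  -- global expansion
  set E : ℝ := ∑ s, ∑ k, (fun j => H j s) ⬝ᵥ (N s k).mulVec (fun j => H j k) with hE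
  set X : ℝ := frobNorm H ^ 2 with hX
  set F : ℝ := frobNorm (Hᵀ * Zbar) ^ 2 with hF
  set tr : ℝ := Matrix.trace ((Zbarᵀ * Zbar) * (Hᵀ * H)) with htrdef
  have hglobal : (1 / (m : ℝ)) * ∑ i, T i ^ 2 = tr + F + E / 2 := by
    have h1 : (1 / (m : ℝ)) * ∑ i, T i ^ 2
        = ∑ s, ∑ k, (1 / (m : ℝ)) * ∑ i, cc i s * cc i k := by
      rw [Finset.mul_sum]
      rw [show ∑ i, (1 / (m : ℝ)) * T i ^ 2
          = ∑ i, ∑ s, ∑ k, (1 / (m : ℝ)) * (cc i s * cc i k) from by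
        apply Finset.sum_congr rfl; intro i _
        rw [htrace i, sq, Finset.sum_mul_sum]
        rw [Finset.mul_sum]
        apply Finset.sum_congr rfl; intro s _
        rw [Finset.mul_sum]]
      rw [Finset.sum_comm]
      apply Finset.sum_congr rfl; intro s _
      rw [Finset.sum_comm]
      apply Finset.sum_congr rfl; intro k _
      rw [Finset.mul_sum]
    rw [h1]
    have h2 : ∀ s k : Fin r, ((fun j => Zbar j s) ⬝ᵥ (fun j => Zbar j k))
        * ((fun j => H j s) ⬝ᵥ (fun j => H j k))
        = (Zbarᵀ * Zbar) s k * (Hᵀ * H) k s := by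
      intro s k
      simp only [Matrix.mul_apply, Matrix.transpose_apply, dotProduct]
      rw [Finset.sum_mul_sum, Finset.sum_mul_sum]
      apply Finset.sum_congr rfl; intro j _
      apply Finset.sum_congr rfl; intro l _
      ring
    have h3 : ∀ s k : Fin r, ((fun j => H j s) ⬝ᵥ (fun j => Zbar j k))
        * ((fun j => Zbar j s) ⬝ᵥ (fun j => H j k))
        = (Hᵀ * Zbar) s k ^ 2 := by
      intro s k
      have ha : (fun j => H j s) ⬝ᵥ (fun j => Zbar j k) = (Hᵀ * Zbar) s k := by
        simp [Matrix.mul_apply, dotProduct]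
      have hbigger : (fun j => Zbar j s) ⬝ᵥ (fun j => H j k) = (Hᵀ * Zbar) k s := by
        simp [Matrix.mul_apply, dotProduct, mul_comm]
      have hsymm : (Hᵀ * Zbar) k s = (Hᵀ * Zbar) s k := by
        conv_lhs => rw [← hWsym]
        rw [transpose_apply]
      rw [ha, hbigger, hsymm, sq]
    have h4 : tr = ∑ s, ∑ k, (Zbarᵀ * Zbar) s k * (Hᵀ * H) k s := by
      rw [htrdef, Matrix.trace]
      apply Finset.sum_congr rfl; intro s _
      rw [Matrix.diag_apply, Matrix.mul_apply]
    have h5 : F = ∑ s, ∑ k, (Hᵀ * Zbar) s k ^ 2 := by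
      rw [hF, frobNorm_sq]
    rw [show (∑ s, ∑ k, (1 / (m : ℝ)) * ∑ i, cc i s * cc i k)
        = ∑ s, ∑ k, (((fun j => H j s) ⬝ᵥ (N s k).mulVec (fun j => H j k)) / 2
          + (Zbarᵀ * Zbar) s k * (Hᵀ * H) k s + (Hᵀ * Zbar) s k ^ 2) from by
      apply Finset.sum_congr rfl; intro s _
      apply Finset.sum_congr rfl; intro k _
      rw [hpoint s k, h2 s k, h3 s k]]
    simp only [Finset.sum_add_distrib]
    rw [h4, h5, hE]
    rw [show (∑ s, ∑ k, ((fun j => H j s) ⬝ᵥ (N s k).mulVec fun j => H j k) / 2)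
        = (∑ s, ∑ k, ((fun j => H j s) ⬝ᵥ (N s k).mulVec fun j => H j k)) / 2 from by
      rw [Finset.sum_div]
      apply Finset.sum_congr rfl; intro s _
      rw [Finset.sum_div]]
    ring
  -- bound on E
  have hEbound : |E| ≤ δ * X := by
    have h1 : |E| ≤ ∑ s, ∑ k, (δ / r) * (nrm s * nrm k) := by
      refine (Finset.abs_sum_le_sum_abs _ _).trans ?_
      apply Finset.sum_le_sum; intro s _
      refine (Finset.abs_sum_le_sum_abs _ _).trans ?_
      apply Finset.sum_le_sum; intro k _
      have hb := abs_dot_mulVec_le (N s k) (fun j => H j s) (fun j => H j k)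
      have hb2 : opNorm (N s k) * Real.sqrt (∑ j, H j s ^ 2) * Real.sqrt (∑ j, H j k ^ 2)
          ≤ (δ / r) * (nrm s * nrm k) := by
        rw [hnrm]
        have := hNop s k
        nlinarith [Real.sqrt_nonneg (∑ j, H j s ^ 2), Real.sqrt_nonneg (∑ j, H j k ^ 2),
          abs_nonneg ((fun j => H j s) ⬝ᵥ (N s k).mulVec (fun j => H j k)),
          hb, mul_le_mul_of_nonneg_right
            (mul_le_mul_of_nonneg_right this (Real.sqrt_nonneg (∑ j, H j s ^ 2)))
            (Real.sqrt_nonneg (∑ j, H j k ^ 2))]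
      exact hb.trans hb2
    have h2 : ∑ s, ∑ k, (δ / r) * (nrm s * nrm k) = (δ / r) * (∑ s, nrm s) ^ 2 := by
      rw [sq, Finset.sum_mul_sum, Finset.mul_sum]
      apply Finset.sum_congr rfl; intro s _
      rw [Finset.mul_sum]
    have h3 : (∑ s, nrm s) ^ 2 ≤ r * ∑ s, nrm s ^ 2 := by
      have := sq_sum_le_card_mul_sum_sq (s := (Finset.univ : Finset (Fin r)))
        (f := nrm)
      simpa using this
    have h4 : ∑ s, nrm s ^ 2 = X := by
      rw [hX, frobNorm_sq, Finset.sum_comm]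
      apply Finset.sum_congr rfl; intro s _
      rw [hnrm, Real.sq_sqrt (Finset.sum_nonneg fun j _ => sq_nonneg _)]
    have h5 : (δ / r) * (∑ s, nrm s) ^ 2 ≤ (δ / r) * (r * X) := by
      apply mul_le_mul_of_nonneg_left _ (by positivity)
      rw [← h4]; exact h3
    have h6 : (δ / r) * (r * X) = δ * X := by
      have hr' : (r : ℝ) ≠ 0 := (Nat.cast_pos.mpr hr).ne'
      field_simp
    calc |E| ≤ ∑ s, ∑ k, (δ / r) * (nrm s * nrm k) := h1
      _ = (δ / r) * (∑ s, nrm s) ^ 2 := h2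
      _ ≤ (δ / r) * (r * X) := h5
      _ = δ * X := h6
  -- eigenvalue bounds on tr
  obtain ⟨U0, hU0, hZb⟩ := hZbar.1
  have hGconj : Zbarᵀ * Zbar = (Vᵀ * U0)ᵀ * Matrix.diagonal sig * (Vᵀ * U0) := by
    rw [show Zbar = Zstar * U0 from hZb, transpose_mul, transpose_mul, transpose_transpose]
    rw [show U0ᵀ * Zstarᵀ * (Zstar * U0) = U0ᵀ * (Zstarᵀ * Zstar) * U0 from by
      simp only [Matrix.mul_assoc], hZZ]
    simp only [Matrix.mul_assoc]
  have hGortho : IsOrthoMat (Vᵀ * U0) := by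
    have hVt : IsOrthoMat Vᵀ := ⟨by rw [transpose_transpose, hV.2],
      by rw [transpose_transpose, hV.1]⟩
    exact hVt.mul hU0
  have hQpsd : (Hᵀ * H).PosSemidef := by
    rw [← conjTranspose_eq_transpose_of_trivial]
    exact Matrix.posSemidef_conjTranspose_mul_self H
  have hlo : ∀ s, sig ⟨r - 1, Nat.sub_lt hr Nat.one_pos⟩ ≤ sig s := by
    intro s
    apply hmono
    rw [Fin.le_def]
    exact Nat.le_sub_one_of_lt s.isLt
  have hhi : ∀ s, sig s ≤ sig ⟨0, hr⟩ := by
    intro s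
    apply hmono
    rw [Fin.le_def]
    exact Nat.zero_le _
  have htrQ : (Hᵀ * H).trace = X := by
    rw [hX, frobNorm_sq, Matrix.trace, Finset.sum_comm]
    apply Finset.sum_congr rfl; intro s _
    simp [Matrix.diag_apply, Matrix.mul_apply, sq]
  have hbounds := trace_conj_bounds sig hGortho hQpsd
    (sig ⟨r - 1, Nat.sub_lt hr Nat.one_pos⟩) (sig ⟨0, hr⟩) hlo hhi
  rw [← hGconj, htrQ, ← htrdef] at hbounds
  -- assemble
  have habs := abs_le.mp hEbound
  have hsum : (∑ i, Matrix.trace (Hᵀ * A i * Zbar) ^ 2) = ∑ i, T i ^ 2 := rfl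
  constructor
  · rw [hsum, hglobal]
    nlinarith [hbounds.1, habs.1]
  · rw [hsum, hglobal]
    nlinarith [hbounds.2, habs.2]
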